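/- For a prime power q, define Δ(a,b) = S_1(a)S_1(b) - S_1(a+b). Then for any b ∈ Z_+, Δ(1, b + (q-1)) - Δ(1, b) = S_1(1 + b). -/
import Mathlib

open Polynomial Finset

/-- With `Δ(a,b) = S_1(a)S_1(b) - S_1(a+b)`, one has
`Δ(1, b+(q-1)) - Δ(1,b) = S_1(1+b)`. -/
theorem stmt_8 (p s q : ℕ) (hp : p.Prime) (hs : 0 < s) (hq : q = p ^ s)
    {F : Type} [Field F] [Fintype F] (hF : Fintype.card F = q)
    (S1 : ℕ → RatFunc F)
    (hS1 : ∀ k, S1 k = ∑ θ : F, ((RatFunc.X + RatFunc.C θ) ^ k)⁻¹)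
    (Δ : ℕ → ℕ → RatFunc F)
    (hΔ : ∀ a b, Δ a b = S1 a * S1 b - S1 (a + b))
    (b : ℕ) (hb : 1 ≤ b) :
    Δ 1 (b + (q - 1)) - Δ 1 b = S1 (1 + b) := by
  classical
  have hq2 : 2 ≤ q := by
    rw [hq]; calc 2 ≤ p := hp.two_le
      _ ≤ p ^ s := Nat.le_self_pow hs.ne' p
  -- characteristic
  haveI hfact : Fact p.Prime := ⟨hp⟩
  haveI hcharF : CharP F p := by
    rw [CharP.charP_iff_prime_eq_zero hp]
    have h0 : ((p : F)) ^ s = 0 := by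
      rw [← Nat.cast_pow, ← hq, ← hF]
      exact FiniteField.cast_card_eq_zero F
    exact pow_eq_zero_iff hs.ne' |>.mp h0
  haveI : CharP (RatFunc F) p :=
    charP_of_injective_ringHom (RatFunc.algebraMap_injective F) p
  have hqF : (q : F) = 0 := by rw [← hF]; exact FiniteField.cast_card_eq_zero F
  -- nonvanishing
  have hne : ∀ θ : F, (RatFunc.X + RatFunc.C θ : RatFunc F) ≠ 0 := by
    intro θ
    rw [← RatFunc.algebraMap_X, ← RatFunc.algebraMap_C, ← map_add]
    exact fun h => Polynomial.X_add_C_ne_zero θ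
      (RatFunc.algebraMap_injective F (by simpa using h))
  -- the product formula
  have hmonic : (X ^ q - X : F[X]).Monic := by
    apply Polynomial.monic_X_pow_sub
    rw [degree_X]
    exact_mod_cast (by omega : 1 < q)
  have hdeg : (X ^ q - X : F[X]).natDegree = q :=
    FiniteField.X_pow_card_sub_X_natDegree_eq F (by omega)
  have hroots : (X ^ q - X : F[X]).roots = Finset.univ.val := by
    have := FiniteField.roots_X_pow_card_sub_X F
    rwa [hF] at this
  have hprod : ∏ θ : F, (X - C θ) = (X ^ q - X : F[X]) := by
    have h := prod_multiset_X_sub_C_of_monic_of_roots_card_eq hmonic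
      (by rw [hroots, hdeg, ← Finset.card_def, Finset.card_univ, hF])
    rw [hroots] at h
    rw [Finset.prod_eq_multiset_prod]
    exact h
  have hprod' : ∏ θ : F, (X + C θ) = (X ^ q - X : F[X]) := by
    rw [← hprod]
    exact Fintype.prod_equiv (Equiv.neg F) _ _ (fun θ => by simp [sub_eq_add_neg])
  -- derivative identity : ∑ over θ of products over erase = -1
  have hderiv : ∑ θ : F, ∏ η ∈ Finset.univ.erase θ, (X + C η) = (-1 : F[X]) := by
    have h1 := Polynomial.derivative_prod (s := (Finset.univ.val : Multiset F))
      (f := fun θ : F => X + C θ)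
    simp only [derivative_add, derivative_X, derivative_C, add_zero, mul_one] at h1
    have h2 : ∑ θ : F, ∏ η ∈ Finset.univ.erase θ, (X + C η) =
        derivative (∏ θ : F, (X + C θ)) := by
      rw [Finset.prod_eq_multiset_prod, h1, Finset.sum_eq_multiset_sum]
      refine congrArg Multiset.sum (Multiset.map_congr rfl fun θ _ => ?_)
      rw [Finset.prod_eq_multiset_prod, Finset.erase_val]
    rw [h2, hprod', derivative_sub, derivative_X_pow, derivative_X]
    simp [hqF]
  -- S1 1 * (X^q - X) = -1 in RatFunc
  set Y : RatFunc F := RatFunc.X with hY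
  have hXq : (Y ^ q - Y : RatFunc F) = algebraMap F[X] (RatFunc F) (X ^ q - X) := by
    simp [hY, RatFunc.algebraMap_X]
  have hSum1 : S1 1 * (Y ^ q - Y) = -1 := by
    rw [hS1, Finset.sum_mul, hXq]
    have hterm : ∀ θ : F, ((Y + RatFunc.C θ) ^ 1)⁻¹ * algebraMap F[X] (RatFunc F) (X ^ q - X)
        = algebraMap F[X] (RatFunc F) (∏ η ∈ Finset.univ.erase θ, (X + C η)) := by
      intro θ
      rw [pow_one, ← hprod', ← Finset.mul_prod_erase _ _ (Finset.mem_univ θ), map_mul]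
      rw [map_add, RatFunc.algebraMap_X, RatFunc.algebraMap_C]
      rw [inv_mul_cancel_left₀ (hne θ)]
    rw [Finset.sum_congr rfl (fun θ _ => hterm θ), ← map_sum, hderiv, map_neg, map_one]
  -- Frobenius
  have hfrob : ∀ θ : F, (Y + RatFunc.C θ) ^ q = Y ^ q + RatFunc.C θ := by
    intro θ
    rw [hq, add_pow_char_pow, ← map_pow, ← hq]
    congr 1
    rw [← hF, FiniteField.pow_card]
  -- the step identity
  obtain ⟨r, hr⟩ : ∃ r, q = r + 1 := ⟨q - 1, by omega⟩
  have hstep : S1 (b + (q - 1)) - S1 b = -(Y ^ q - Y) * S1 (b + q) := by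
    rw [hS1, hS1, hS1, ← Finset.sum_sub_distrib, Finset.mul_sum]
    refine Finset.sum_congr rfl fun θ _ => ?_
    have hu := hne θ
    have hxq : Y ^ q - Y = (Y + RatFunc.C θ) ^ q - (Y + RatFunc.C θ) := by
      rw [hfrob θ]; ring
    rw [hxq]
    set u : RatFunc F := Y + RatFunc.C θ with hu'
    have e1 : b + (q - 1) = b + r := by omega
    have e2 : b + q = b + r + 1 := by omega
    rw [e1, e2, hr, pow_succ u (b + r), pow_succ u r, pow_add u b r]
    have hb' : (u : RatFunc F) ^ b ≠ 0 := pow_ne_zero _ hu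
    have hr' : (u : RatFunc F) ^ r ≠ 0 := pow_ne_zero _ hu
    field_simp
    ring
  have h1 : 1 + (b + (q - 1)) = b + q := by omega
  rw [hΔ, hΔ, h1]
  linear_combination S1 1 * hstep - S1 (b + q) * hSum1
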